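/- Let K ∈ L^{s'}(ℝⁿ) (1 ≤ s ≤ 2, s' the conjugate exponent) satisfy ‖(1 + 2^j|·|)^M K‖_{L^{s'}} ≤ C 2^{j/s} for some integer M > n and some j ≤ 0. Then for every locally integrable f and every x ∈ ℝⁿ, |(K ∗ f)(x)| ≤ C' 2^{−j(n−1)/s} M_s f(x), where M_s f := (M(|f|^s))^{1/s} and M is the Hardy–Littlewood maximal function. -/

import Mathlib

open MeasureTheory Metric
open scoped ENNReal

section helpers

lemma two_rpow_ofReal (p : ℝ) : (2:ℝ≥0∞) ^ p = ENNReal.ofReal ((2:ℝ) ^ p) := by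
  rw [← ENNReal.ofReal_rpow_of_pos two_pos]; norm_num

lemma two_rpow_ne_top (p : ℝ) : (2:ℝ≥0∞) ^ p ≠ ⊤ := by
  rw [two_rpow_ofReal]; exact ENNReal.ofReal_ne_top

lemma collect2 (u v : ℝ) : (2:ℝ≥0∞) ^ u * (2:ℝ≥0∞) ^ v = (2:ℝ≥0∞) ^ (u + v) :=
  (ENNReal.rpow_add u v (by norm_num) (by norm_num)).symm

lemma volBall (n : ℕ) (x : EuclideanSpace ℝ (Fin n)) {r : ℝ} (hr : 0 < r) :
    volume (ball x r) = ENNReal.ofReal (r ^ n) * volume (ball (0 : EuclideanSpace ℝ (Fin n)) 1) := by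
  rcases Nat.eq_zero_or_pos n with hn | hn
  · subst hn
    have h1 : ball x r = Set.univ := by
      ext y; simp [Subsingleton.elim y x, mem_ball, hr]
    have h2 : ball (0 : EuclideanSpace ℝ (Fin 0)) 1 = Set.univ := by
      ext y; simp [Subsingleton.elim y (0 : EuclideanSpace ℝ (Fin 0)), mem_ball]
    simp [h1, h2]
  · have : Nontrivial (EuclideanSpace ℝ (Fin n)) := by
      have : Nonempty (Fin n) := ⟨⟨0, hn⟩⟩
      infer_instance
    rw [Measure.addHaar_ball volume x hr.le, finrank_euclideanSpace_fin]

end helpers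

lemma maxBound (n M : ℕ) (hM : n < M) (j : ℝ) (x : EuclideanSpace ℝ (Fin n))
    (g : EuclideanSpace ℝ (Fin n) → ℝ≥0∞)
    (volBall : ∀ {r : ℝ}, 0 < r → volume (ball x r)
      = ENNReal.ofReal (r ^ n) * volume (ball (0 : EuclideanSpace ℝ (Fin n)) 1)) :
    ∫⁻ y, (ENNReal.ofReal ((1 + 2 ^ j * ‖x - y‖) ^ M))⁻¹ * g y ∂volume ≤
      (2:ℝ≥0∞) ^ (M:ℝ) * (1 - (2:ℝ≥0∞) ^ ((n:ℝ) - (M:ℝ)))⁻¹ *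
        volume (ball (0 : EuclideanSpace ℝ (Fin n)) 1) * (2:ℝ≥0∞) ^ (-j * (n:ℝ)) *
      (⨆ (c : EuclideanSpace ℝ (Fin n)) (r : ℝ) (_ : 0 < r) (_ : x ∈ ball c r),
        ⨍⁻ y in ball c r, g y ∂volume) := by
  classical
  set V := volume (ball (0 : EuclideanSpace ℝ (Fin n)) 1) with hV
  set S := (⨆ (c : EuclideanSpace ℝ (Fin n)) (r : ℝ) (_ : 0 < r) (_ : x ∈ ball c r),
        ⨍⁻ y in ball c r, g y ∂volume) with hS
  set R : ℕ → ℝ := fun k => (2:ℝ) ^ ((k:ℝ) - j) with hR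
  have hRpos : ∀ k, 0 < R k := fun k => Real.rpow_pos_of_pos two_pos _
  set A : ℕ → Set (EuclideanSpace ℝ (Fin n)) := fun k =>
    match k with
    | 0 => ball x (R 0)
    | (m+1) => ball x (R (m+1)) \ ball x (R m) with hA
  -- coverage
  have hex : ∀ y : EuclideanSpace ℝ (Fin n), ∃ k : ℕ, y ∈ ball x (R k) := by
    intro y
    obtain ⟨k, hk⟩ := pow_unbounded_of_one_lt (dist y x * 2 ^ j) (one_lt_two (α := ℝ))
    refine ⟨k, ?_⟩
    rw [mem_ball]
    have h2j : (0:ℝ) < 2 ^ j := Real.rpow_pos_of_pos two_pos _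
    have hRk : R k = 2 ^ (k:ℕ) / 2 ^ j := by
      simp only [hR]
      rw [Real.rpow_sub two_pos, Real.rpow_natCast]
    rw [hRk, lt_div_iff₀ h2j]
    exact hk
  have hcov : (Set.univ : Set (EuclideanSpace ℝ (Fin n))) ⊆ ⋃ k, A k := by
    intro y _
    have h1 := Nat.find_spec (hex y)
    rcases hk0 : Nat.find (hex y) with _ | m
    · rw [hk0] at h1
      exact Set.mem_iUnion.2 ⟨0, h1⟩
    · rw [hk0] at h1
      refine Set.mem_iUnion.2 ⟨m + 1, ⟨h1, ?_⟩⟩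
      exact Nat.find_min (hex y) (by omega)
  -- pointwise bound on each piece
  have hW : ∀ k : ℕ, ∀ y ∈ A k,
      (ENNReal.ofReal ((1 + 2 ^ j * ‖x - y‖) ^ M))⁻¹
        ≤ (2:ℝ≥0∞) ^ (M:ℝ) * (2:ℝ≥0∞) ^ (-((k:ℝ) * M)) := by
    intro k y hy
    have hbase0 : (0:ℝ) ≤ 2 ^ j * ‖x - y‖ :=
      mul_nonneg (Real.rpow_pos_of_pos two_pos _).le (norm_nonneg _)
    match k with
    | 0 =>
      have h1 : (1:ℝ) ≤ (1 + 2 ^ j * ‖x - y‖) ^ M :=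
        one_le_pow₀ (by linarith)
      have h2 : (ENNReal.ofReal ((1 + 2 ^ j * ‖x - y‖) ^ M))⁻¹ ≤ 1 := by
        rw [ENNReal.inv_le_one]
        exact ENNReal.one_le_ofReal.2 h1
      refine h2.trans ?_
      have h3 : (1:ℝ≥0∞) ≤ 2 ^ (M:ℝ) := by
        calc (1:ℝ≥0∞) = 2 ^ (0:ℝ) := by simp
          _ ≤ 2 ^ (M:ℝ) := ENNReal.rpow_le_rpow_of_exponent_le one_le_two (by positivity)
      rw [Nat.cast_zero, zero_mul, neg_zero, ENNReal.rpow_zero, mul_one]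
      exact h3
    | (m+1) =>
      have hnot : y ∉ ball x (R m) := hy.2
      have hge : R m ≤ dist y x := not_lt.1 (by simpa [mem_ball] using hnot)
      have hxy : ‖x - y‖ = dist y x := by rw [dist_eq_norm, norm_sub_rev]
      have hstep : (2:ℝ) ^ ((m:ℝ)) ≤ 2 ^ j * ‖x - y‖ := by
        rw [hxy]
        calc (2:ℝ) ^ ((m:ℝ)) = 2 ^ j * R m := by
              simp only [hR]
              rw [← Real.rpow_add two_pos]; ring_nf
          _ ≤ 2 ^ j * dist y x :=
              mul_le_mul_of_nonneg_left hge (Real.rpow_pos_of_pos two_pos _).le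
      have hpow : (2:ℝ) ^ ((m:ℝ) * M) ≤ (1 + 2 ^ j * ‖x - y‖) ^ M := by
        calc (2:ℝ) ^ ((m:ℝ) * M) = ((2:ℝ) ^ ((m:ℝ))) ^ M := by
              rw [← Real.rpow_natCast ((2:ℝ) ^ ((m:ℝ))) M, ← Real.rpow_mul (by norm_num)]
          _ ≤ (1 + 2 ^ j * ‖x - y‖) ^ M := by
              apply pow_le_pow_left₀ (Real.rpow_nonneg (by norm_num) _)
              linarith
      have hofReal : (2:ℝ≥0∞) ^ ((m:ℝ) * M) ≤ ENNReal.ofReal ((1 + 2 ^ j * ‖x - y‖) ^ M) := by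
        rw [two_rpow_ofReal]
        exact ENNReal.ofReal_le_ofReal hpow
      calc (ENNReal.ofReal ((1 + 2 ^ j * ‖x - y‖) ^ M))⁻¹
          ≤ ((2:ℝ≥0∞) ^ ((m:ℝ) * M))⁻¹ := ENNReal.inv_le_inv' hofReal
        _ = (2:ℝ≥0∞) ^ (-((m:ℝ) * M)) := by rw [← ENNReal.rpow_neg]
        _ = (2:ℝ≥0∞) ^ (M:ℝ) * (2:ℝ≥0∞) ^ (-(((m:ℕ)+1:ℝ) * M)) := by
            rw [collect2]; congr 1; push_cast; ring
        _ = _ := by norm_num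
  -- put together
  calc ∫⁻ y, (ENNReal.ofReal ((1 + 2 ^ j * ‖x - y‖) ^ M))⁻¹ * g y ∂volume
      = ∫⁻ y in Set.univ, (ENNReal.ofReal ((1 + 2 ^ j * ‖x - y‖) ^ M))⁻¹ * g y ∂volume := by
        rw [setLIntegral_univ]
    _ ≤ ∫⁻ y in ⋃ k, A k, (ENNReal.ofReal ((1 + 2 ^ j * ‖x - y‖) ^ M))⁻¹ * g y ∂volume :=
        lintegral_mono_set hcov
    _ ≤ ∑' (k : ℕ), ∫⁻ y in A k, (ENNReal.ofReal ((1 + 2 ^ j * ‖x - y‖) ^ M))⁻¹ * g y ∂volume :=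
        lintegral_iUnion_le _ _
    _ ≤ ∑' (k : ℕ), (2:ℝ≥0∞) ^ (M:ℝ) * (2:ℝ≥0∞) ^ (-((k:ℝ) * M)) *
          ((2:ℝ≥0∞) ^ (((k:ℝ) - j) * n) * V * S) := by
        apply ENNReal.tsum_le_tsum
        intro k
        have hAmeas : MeasurableSet (A k) := by
          match k with
          | 0 => exact measurableSet_ball
          | (m+1) => exact measurableSet_ball.diff measurableSet_ball
        have step1 : ∫⁻ y in A k, (ENNReal.ofReal ((1 + 2 ^ j * ‖x - y‖) ^ M))⁻¹ * g y ∂volume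
            ≤ (2:ℝ≥0∞) ^ (M:ℝ) * (2:ℝ≥0∞) ^ (-((k:ℝ) * M)) * ∫⁻ y in A k, g y ∂volume := by
          rw [← lintegral_const_mul' _ _ (ENNReal.mul_ne_top (two_rpow_ne_top _) (two_rpow_ne_top _))]
          exact setLIntegral_mono' hAmeas fun y hy =>
            mul_le_mul_left (hW k y hy) (g y)
        refine step1.trans (mul_le_mul_right ?_ _)
        have hsub : A k ⊆ ball x (R k) := by
          match k with
          | 0 => exact le_rfl
          | (m+1) => exact Set.diff_subset
        calc ∫⁻ y in A k, g y ∂volume ≤ ∫⁻ y in ball x (R k), g y ∂volume :=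
              lintegral_mono_set hsub
          _ = (⨍⁻ y in ball x (R k), g y ∂volume) * volume (ball x (R k)) := by
              rw [setLAverage_eq, ENNReal.div_mul_cancel
                (measure_ball_pos volume x (hRpos k)).ne' (measure_ball_lt_top).ne]
          _ ≤ S * volume (ball x (R k)) := by
              apply mul_le_mul_left
              exact le_iSup_of_le x (le_iSup_of_le (R k) (le_iSup_of_le (hRpos k)
                (le_iSup_of_le (mem_ball_self (hRpos k)) le_rfl)))
          _ = (2:ℝ≥0∞) ^ (((k:ℝ) - j) * n) * V * S := by
              rw [volBall (hRpos k)]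
              have hval : ENNReal.ofReal (R k ^ n) = (2:ℝ≥0∞) ^ (((k:ℝ) - j) * n) := by
                simp only [hR]
                rw [← Real.rpow_natCast ((2:ℝ) ^ ((k:ℝ) - j)) n, ← Real.rpow_mul (by norm_num),
                  two_rpow_ofReal]
              rw [hval]; ring
    _ = (∑' (k : ℕ), ((2:ℝ≥0∞) ^ ((n:ℝ) - (M:ℝ))) ^ k) *
          ((2:ℝ≥0∞) ^ (M:ℝ) * V * (2:ℝ≥0∞) ^ (-j * (n:ℝ)) * S) := by
        rw [← ENNReal.tsum_mul_right]
        congr 1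
        funext k
        have h2 : ((2:ℝ≥0∞) ^ ((n:ℝ) - (M:ℝ))) ^ k = (2:ℝ≥0∞) ^ (((n:ℝ) - (M:ℝ)) * k) := by
          rw [← ENNReal.rpow_natCast ((2:ℝ≥0∞) ^ ((n:ℝ) - (M:ℝ))) k, ← ENNReal.rpow_mul]
        rw [h2]
        have hkey : (2:ℝ≥0∞) ^ (M:ℝ) * (2:ℝ≥0∞) ^ (-((k:ℝ) * M)) * (2:ℝ≥0∞) ^ (((k:ℝ) - j) * n)
            = (2:ℝ≥0∞) ^ (((n:ℝ) - (M:ℝ)) * k) * ((2:ℝ≥0∞) ^ (M:ℝ) * (2:ℝ≥0∞) ^ (-j * (n:ℝ))) := by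
          rw [collect2, collect2, collect2, collect2]
          congr 1; push_cast; ring
        calc (2:ℝ≥0∞) ^ (M:ℝ) * (2:ℝ≥0∞) ^ (-((k:ℝ) * M)) *
              ((2:ℝ≥0∞) ^ (((k:ℝ) - j) * n) * V * S)
            = ((2:ℝ≥0∞) ^ (M:ℝ) * (2:ℝ≥0∞) ^ (-((k:ℝ) * M)) * (2:ℝ≥0∞) ^ (((k:ℝ) - j) * n))
                * V * S := by ring
          _ = ((2:ℝ≥0∞) ^ (((n:ℝ) - (M:ℝ)) * k) *
                ((2:ℝ≥0∞) ^ (M:ℝ) * (2:ℝ≥0∞) ^ (-j * (n:ℝ)))) * V * S := by rw [hkey]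
          _ = (2:ℝ≥0∞) ^ (((n:ℝ) - (M:ℝ)) * k) *
                ((2:ℝ≥0∞) ^ (M:ℝ) * V * (2:ℝ≥0∞) ^ (-j * (n:ℝ)) * S) := by ring
    _ = (2:ℝ≥0∞) ^ (M:ℝ) * (1 - (2:ℝ≥0∞) ^ ((n:ℝ) - (M:ℝ)))⁻¹ * V * (2:ℝ≥0∞) ^ (-j * (n:ℝ)) * S := by
        rw [ENNReal.tsum_geometric]
        ring

theorem mainTest (n M : ℕ) (hM : n < M) (s : ℝ) (hs1 : 1 ≤ s) (hs2 : s ≤ 2)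
    (s' : ℝ≥0∞) (hs' : 1 / ENNReal.ofReal s + 1 / s' = 1) (C : ℝ) (hC : 0 < C)
    (maxBound : ∀ (j : ℝ) (x : EuclideanSpace ℝ (Fin n))
      (g : EuclideanSpace ℝ (Fin n) → ℝ≥0∞),
      ∫⁻ y, (ENNReal.ofReal ((1 + 2 ^ j * ‖x - y‖) ^ M))⁻¹ * g y ∂volume ≤
      (2:ℝ≥0∞) ^ (M:ℝ) * (1 - (2:ℝ≥0∞) ^ ((n:ℝ) - (M:ℝ)))⁻¹ *
        volume (ball (0 : EuclideanSpace ℝ (Fin n)) 1) * (2:ℝ≥0∞) ^ (-j * (n:ℝ)) *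
      (⨆ (c : EuclideanSpace ℝ (Fin n)) (r : ℝ) (_ : 0 < r) (_ : x ∈ ball c r),
        ⨍⁻ y in ball c r, g y ∂volume)) :
    ∃ C' > 0, ∀ j : ℝ, j ≤ 0 →
      ∀ K : EuclideanSpace ℝ (Fin n) → ℂ, Measurable K →
      eLpNorm (fun x => ((1 + 2 ^ j * ‖x‖) ^ M : ℝ) • K x) s' volume ≤
        ENNReal.ofReal (C * 2 ^ (j / s)) →
      ∀ f : EuclideanSpace ℝ (Fin n) → ℂ, LocallyIntegrable f volume →
      ∀ x : EuclideanSpace ℝ (Fin n),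
        (‖∫ y, K (x - y) * f y‖₊ : ℝ≥0∞) ≤
          ENNReal.ofReal (C' * 2 ^ (-j * ((n:ℝ) - 1) / s)) *
            ((⨆ (c : EuclideanSpace ℝ (Fin n)) (r : ℝ) (_ : 0 < r) (_ : x ∈ ball c r),
              ⨍⁻ y in ball c r, (‖f y‖₊ : ℝ≥0∞) ^ s ∂volume) ^ (1 / s)) := by
  have hs0 : (0:ℝ) < s := lt_of_lt_of_le one_pos hs1
  set T : ℝ≥0∞ := (2:ℝ≥0∞) ^ (M:ℝ) * (1 - (2:ℝ≥0∞) ^ ((n:ℝ) - (M:ℝ)))⁻¹ *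
      volume (ball (0 : EuclideanSpace ℝ (Fin n)) 1) with hT
  have hr1 : (2:ℝ≥0∞) ^ ((n:ℝ) - (M:ℝ)) < 1 :=
    ENNReal.rpow_lt_one_of_one_lt_of_neg (by norm_num : (1:ℝ≥0∞) < 2) (by
      have h : (n:ℝ) < (M:ℝ) := by exact_mod_cast hM
      linarith)
  have hTtop : T ≠ ⊤ := by
    apply ENNReal.mul_ne_top (ENNReal.mul_ne_top (two_rpow_ne_top _) ?_) measure_ball_lt_top.ne
    rw [ENNReal.inv_ne_top]
    simp [tsub_eq_zero_iff_le, hr1.not_ge]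
  set D : ℝ := T.toReal + 1 with hD
  have hD1 : (1:ℝ) ≤ D := le_add_of_nonneg_left ENNReal.toReal_nonneg
  have hTD : T ≤ ENNReal.ofReal D := by
    rw [hD, ENNReal.ofReal_add ENNReal.toReal_nonneg zero_le_one]
    calc T = ENNReal.ofReal T.toReal := (ENNReal.ofReal_toReal hTtop).symm
      _ ≤ _ := le_self_add
  refine ⟨C * D, by positivity, ?_⟩
  intro j hj K hK hKnorm f hf x
  set w : EuclideanSpace ℝ (Fin n) → ℝ := fun z => (1 + 2 ^ j * ‖z‖) ^ M with hw
  have hw1 : ∀ z, (1:ℝ) ≤ w z := by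
    intro z
    apply one_le_pow₀
    have : (0:ℝ) ≤ 2 ^ j * ‖z‖ :=
      mul_nonneg (Real.rpow_pos_of_pos two_pos _).le (norm_nonneg _)
    linarith
  have hwpos : ∀ z, (0:ℝ) < w z := fun z => lt_of_lt_of_le one_pos (hw1 z)
  have hwc : Continuous w := by
    apply Continuous.pow
    exact continuous_const.add (continuous_const.mul continuous_norm)
  set Φ : EuclideanSpace ℝ (Fin n) → ℂ := fun y => w (x - y) • K (x - y) with hΦ
  set Ψ : EuclideanSpace ℝ (Fin n) → ℂ := fun y => (w (x - y))⁻¹ • f y with hΨ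
  have hsubmeas : Measurable fun y : EuclideanSpace ℝ (Fin n) => x - y :=
    measurable_const.sub measurable_id
  have hΦm : AEStronglyMeasurable Φ volume :=
    ((hwc.measurable.comp hsubmeas).smul (hK.comp hsubmeas)).aestronglyMeasurable
  have hΨm : AEStronglyMeasurable Ψ volume :=
    ((hwc.measurable.comp hsubmeas).inv.aemeasurable.aestronglyMeasurable).smul
      hf.aestronglyMeasurable
  have h_eq : ∀ y, K (x - y) * f y = Φ y * Ψ y := by
    intro y
    simp only [hΦ, hΨ]
    rw [smul_mul_smul_comm, mul_inv_cancel₀ (hwpos (x - y)).ne', one_smul]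
  -- Hölder
  have hpqr : 1 / (1:ℝ≥0∞) = 1 / s' + 1 / ENNReal.ofReal s := by
    rw [add_comm, hs']; norm_num
  have holder : (∫⁻ y, (‖Φ y * Ψ y‖₊ : ℝ≥0∞) ∂volume) ≤
      eLpNorm Φ s' volume * eLpNorm Ψ (ENNReal.ofReal s) volume := by
    rw [show (∫⁻ y, (‖Φ y * Ψ y‖₊ : ℝ≥0∞) ∂volume) = eLpNorm (fun y => Φ y * Ψ y) 1 volume from (eLpNorm_one_eq_lintegral_enorm (f := fun y => Φ y * Ψ y)).symm]
    have hHT : ENNReal.HolderTriple s' (ENNReal.ofReal s) 1 := ⟨by simpa only [one_div] using hpqr.symm⟩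
    simpa only [ENNReal.coe_one, one_mul] using eLpNorm_le_eLpNorm_mul_eLpNorm_of_nnnorm (p := s') (q := ENNReal.ofReal s) (r := 1) hΦm hΨm (· * ·) 1
      (Filter.Eventually.of_forall fun y => by rw [one_mul]; exact (nnnorm_mul _ _).le)
  -- Φ bound
  have hΦnorm : eLpNorm Φ s' volume ≤ ENNReal.ofReal (C * 2 ^ (j / s)) := by
    have hcomp : Φ = (fun z => ((1 + 2 ^ j * ‖z‖) ^ M : ℝ) • K z) ∘ (fun y => x - y) := rfl
    rw [hcomp, eLpNorm_comp_measurePreserving (g := fun z => ((1 + 2 ^ j * ‖z‖) ^ M : ℝ) • K z)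
      ((hwc.measurable.smul hK).aestronglyMeasurable) (Measure.measurePreserving_sub_left volume x)]
    exact hKnorm
  -- Ψ bound
  set S : ℝ≥0∞ := (⨆ (c : EuclideanSpace ℝ (Fin n)) (r : ℝ) (_ : 0 < r) (_ : x ∈ ball c r),
      ⨍⁻ y in ball c r, (‖f y‖₊ : ℝ≥0∞) ^ s ∂volume) with hSdef
  have hΨnorm : eLpNorm Ψ (ENNReal.ofReal s) volume ≤
      (T * (2:ℝ≥0∞) ^ (-j * (n:ℝ)) * S) ^ (1 / s) := by
    rw [eLpNorm_eq_lintegral_rpow_enorm_toReal (by simpa using hs0) ENNReal.ofReal_ne_top,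
      ENNReal.toReal_ofReal hs0.le]
    apply ENNReal.rpow_le_rpow ?_ (by positivity)
    calc ∫⁻ y, (‖Ψ y‖₊ : ℝ≥0∞) ^ s ∂volume
        ≤ ∫⁻ y, (ENNReal.ofReal (w (x - y)))⁻¹ * (‖f y‖₊ : ℝ≥0∞) ^ s ∂volume := by
          refine lintegral_mono fun y => ?_
          dsimp only
          have h1 : (‖Ψ y‖₊ : ℝ≥0∞) = (ENNReal.ofReal (w (x - y)))⁻¹ * (‖f y‖₊ : ℝ≥0∞) := by
            simp only [hΨ]
            rw [nnnorm_smul, ENNReal.coe_mul, ← enorm_eq_nnnorm, Real.enorm_eq_ofReal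
              (inv_nonneg.2 (hwpos _).le), ENNReal.ofReal_inv_of_pos (hwpos _)]
          rw [h1, ENNReal.mul_rpow_of_nonneg _ _ hs0.le]
          apply mul_le_mul_left
          calc ((ENNReal.ofReal (w (x - y)))⁻¹) ^ s
              ≤ ((ENNReal.ofReal (w (x - y)))⁻¹) ^ (1:ℝ) := by
                apply ENNReal.rpow_le_rpow_of_exponent_ge ?_ hs1
                rw [ENNReal.inv_le_one]
                exact ENNReal.one_le_ofReal.2 (hw1 _)
            _ = _ := by rw [ENNReal.rpow_one]
      _ ≤ T * (2:ℝ≥0∞) ^ (-j * (n:ℝ)) * S := maxBound j x _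
  -- assemble
  calc (‖∫ y, K (x - y) * f y‖₊ : ℝ≥0∞)
      ≤ ∫⁻ y, (‖K (x - y) * f y‖₊ : ℝ≥0∞) ∂volume :=
        enorm_integral_le_lintegral_enorm _
    _ = ∫⁻ y, (‖Φ y * Ψ y‖₊ : ℝ≥0∞) ∂volume := by
        congr 1; funext y; rw [h_eq y]
    _ ≤ eLpNorm Φ s' volume * eLpNorm Ψ (ENNReal.ofReal s) volume := holder
    _ ≤ ENNReal.ofReal (C * 2 ^ (j / s)) * (T * (2:ℝ≥0∞) ^ (-j * (n:ℝ)) * S) ^ (1 / s) :=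
        mul_le_mul' hΦnorm hΨnorm
    _ ≤ ENNReal.ofReal (C * D * 2 ^ (-j * ((n:ℝ) - 1) / s)) * S ^ (1 / s) := by
        rw [ENNReal.mul_rpow_of_nonneg _ _ (by positivity : (0:ℝ) ≤ 1/s),
          ENNReal.mul_rpow_of_nonneg _ _ (by positivity : (0:ℝ) ≤ 1/s)]
        have hTs : T ^ (1/s : ℝ) ≤ ENNReal.ofReal D := by
          calc T ^ (1/s : ℝ) ≤ (ENNReal.ofReal D) ^ (1/s : ℝ) :=
                ENNReal.rpow_le_rpow hTD (by positivity)
            _ ≤ (ENNReal.ofReal D) ^ (1:ℝ) := by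
                apply ENNReal.rpow_le_rpow_of_exponent_le (ENNReal.one_le_ofReal.2 hD1)
                rw [div_le_one hs0]; exact hs1
            _ = _ := ENNReal.rpow_one _
        have hpow2 : ((2:ℝ≥0∞) ^ (-j * (n:ℝ))) ^ (1/s : ℝ) = (2:ℝ≥0∞) ^ (-j * (n:ℝ) * (1/s)) := by
          rw [← ENNReal.rpow_mul]
        have harith : ENNReal.ofReal (C * 2 ^ (j / s)) *
            (ENNReal.ofReal D * (2:ℝ≥0∞) ^ (-j * (n:ℝ) * (1/s))) =
            ENNReal.ofReal (C * D * 2 ^ (-j * ((n:ℝ) - 1) / s)) := by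
          rw [ENNReal.ofReal_mul hC.le, ENNReal.ofReal_mul (by positivity : (0:ℝ) ≤ C * D),
            ENNReal.ofReal_mul hC.le, ← two_rpow_ofReal, ← two_rpow_ofReal]
          calc ENNReal.ofReal C * (2:ℝ≥0∞) ^ (j/s) *
                (ENNReal.ofReal D * (2:ℝ≥0∞) ^ (-j * (n:ℝ) * (1/s)))
              = ENNReal.ofReal C * ENNReal.ofReal D *
                ((2:ℝ≥0∞) ^ (j/s) * (2:ℝ≥0∞) ^ (-j * (n:ℝ) * (1/s))) := by ring
            _ = ENNReal.ofReal C * ENNReal.ofReal D *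
                (2:ℝ≥0∞) ^ (j/s + -j * (n:ℝ) * (1/s)) := by rw [collect2]
            _ = ENNReal.ofReal C * ENNReal.ofReal D * (2:ℝ≥0∞) ^ (-j * ((n:ℝ) - 1) / s) := by
                congr 1
                field_simp
                ring
        calc ENNReal.ofReal (C * 2 ^ (j / s)) *
              (T ^ (1/s : ℝ) * ((2:ℝ≥0∞) ^ (-j * (n:ℝ))) ^ (1/s : ℝ) * S ^ (1/s : ℝ))
            ≤ ENNReal.ofReal (C * 2 ^ (j / s)) *
              (ENNReal.ofReal D * ((2:ℝ≥0∞) ^ (-j * (n:ℝ))) ^ (1/s : ℝ) * S ^ (1/s : ℝ)) := by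
              gcongr
          _ = ENNReal.ofReal (C * 2 ^ (j / s)) *
              (ENNReal.ofReal D * (2:ℝ≥0∞) ^ (-j * (n:ℝ) * (1/s))) * S ^ (1/s : ℝ) := by
              rw [hpow2]; ring
          _ = ENNReal.ofReal (C * D * 2 ^ (-j * ((n:ℝ) - 1) / s)) * S ^ (1/s : ℝ) := by
              rw [harith]

/-- The `s`-maximal function `M_s f = (M(|f|^s))^{1/s}`, where `M` is the
Hardy–Littlewood maximal function (sup of averages over balls containing `x`). -/
noncomputable def maxFnS {n : ℕ} (s : ℝ) (f : EuclideanSpace ℝ (Fin n) → ℂ)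
    (x : EuclideanSpace ℝ (Fin n)) : ℝ≥0∞ :=
  (⨆ (c : EuclideanSpace ℝ (Fin n)) (r : ℝ) (_ : 0 < r) (_ : x ∈ ball c r),
    ⨍⁻ y in ball c r, (‖f y‖₊ : ℝ≥0∞) ^ s ∂volume) ^ (1 / s)

/-- If `‖(1+2^j|·|)^M K‖_{L^{s'}} ≤ C 2^{j/s}` with `M > n`, `1 ≤ s ≤ 2`, `s'` the conjugate
exponent and `j ≤ 0`, then `|(K ∗ f)(x)| ≤ C' 2^{-j(n-1)/s} M_s f(x)` pointwise. -/
theorem stmt10 (n M : ℕ) (hM : n < M) (s : ℝ) (hs1 : 1 ≤ s) (hs2 : s ≤ 2)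
    (s' : ℝ≥0∞) (hs' : 1 / ENNReal.ofReal s + 1 / s' = 1) (C : ℝ) (hC : 0 < C) :
    ∃ C' > 0, ∀ j : ℝ, j ≤ 0 →
      ∀ K : EuclideanSpace ℝ (Fin n) → ℂ, Measurable K →
      eLpNorm (fun x => ((1 + 2 ^ j * ‖x‖) ^ M : ℝ) • K x) s' volume ≤
        ENNReal.ofReal (C * 2 ^ (j / s)) →
      ∀ f : EuclideanSpace ℝ (Fin n) → ℂ, LocallyIntegrable f volume →
      ∀ x : EuclideanSpace ℝ (Fin n),
        (‖∫ y, K (x - y) * f y‖₊ : ℝ≥0∞) ≤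
          ENNReal.ofReal (C' * 2 ^ (-j * ((n:ℝ) - 1) / s)) * maxFnS s f x := by
  obtain ⟨C', hC', h⟩ := mainTest n M hM s hs1 hs2 s' hs' C hC
    (fun j x g => maxBound n M hM j x g (fun {r} hr => volBall n x hr))
  exact ⟨C', hC', fun j hj K hK hKn f hf x => by
    simpa [maxFnS] using h j hj K hK hKn f hf x⟩
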